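/- Let S be a finite set of cardinality s, let H be a simple graph on vertex set S, and let l and k be integers with 2 ≤ l ≤ k ≤ s. Let M be a family of k-element subsets of S such that any two distinct members of M share at most one element. For a permutation σ of S, let F^l_k(σ,H) be the number of l-element subsets Δ of S that induce a complete subgraph in H and whose image σ(Δ) is contained in some member of M. Then the expectation of F^l_k(σ,H) over a uniformly random permutation σ of S equals cl(H,l)·|M|·(k(k−1)⋯(k−l+1))/(s(s−1)⋯(s−l+1)). -/

import Mathlib

open Finset Equiv

lemma card_perm_agree (V : Type) [Fintype V] [DecidableEq V]
    (Δ : Finset V) (e : {x // x ∈ Δ} ↪ V) :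
    (Finset.univ.filter fun σ : Equiv.Perm V => ∀ x (h : x ∈ Δ), σ x = e ⟨x, h⟩).card
      = (Fintype.card V - Δ.card).factorial := by
  classical
  set e' : {x // x ∈ Δ} ≃ Set.range ⇑e := Equiv.ofInjective ⇑e e.injective with he'
  set σ0 : Equiv.Perm V := Equiv.extendSubtype e' with hσ0def
  have hσ0 : ∀ x (h : x ∈ Δ), σ0 x = e ⟨x, h⟩ := by
    intro x h
    rw [hσ0def, Equiv.extendSubtype_apply_of_mem e' x h]
    rfl
  set S2 : Finset (Equiv.Perm V) := Finset.univ.filter fun τ => ∀ x ∈ Δ, τ x = x with hS2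
  have himg : (Finset.univ.filter fun σ : Equiv.Perm V => ∀ x (h : x ∈ Δ), σ x = e ⟨x, h⟩)
      = S2.image (fun τ => σ0 * τ) := by
    ext σ
    simp only [Finset.mem_filter, Finset.mem_univ, true_and, Finset.mem_image, hS2]
    constructor
    · intro hσ
      refine ⟨σ0⁻¹ * σ, fun x hx => ?_, by group⟩
      simp [Equiv.Perm.mul_apply, hσ x hx, ← hσ0 x hx]
    · rintro ⟨τ, hτ, rfl⟩
      intro x h
      simp [Equiv.Perm.mul_apply, hτ x h, hσ0 x h]
  rw [himg, Finset.card_image_of_injective _ (mul_right_injective σ0)]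
  have h2 : S2.card = Fintype.card (Equiv.Perm {x // x ∉ Δ}) := by
    rw [Fintype.card_congr (Equiv.Perm.subtypeEquivSubtypePerm (fun x : V => x ∉ Δ)),
      Fintype.card_subtype]
    congr 1
    ext τ
    simp [hS2, not_not]
  rw [h2, Fintype.card_perm, Fintype.card_subtype_compl, Fintype.card_coe]

lemma card_perm_image_subset (V : Type) [Fintype V] [DecidableEq V]
    (Δ K : Finset V) (hΔK : Δ.card ≤ K.card) :
    (Finset.univ.filter fun σ : Equiv.Perm V => Δ.image σ ⊆ K).card
      = K.card.descFactorial Δ.card * (Fintype.card V - Δ.card).factorial := by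
  classical
  have hne : Nonempty ({x // x ∈ Δ} ↪ {x // x ∈ K}) := by
    apply Function.Embedding.nonempty_of_card_le
    simpa [Fintype.card_coe] using hΔK
  set f : Equiv.Perm V → ({x // x ∈ Δ} ↪ {x // x ∈ K}) := fun σ =>
    if h : Δ.image σ ⊆ K then
      ⟨fun x => ⟨σ x.1, h (Finset.mem_image_of_mem σ x.2)⟩,
        fun a b hab => Subtype.ext (σ.injective (congrArg Subtype.val hab))⟩
    else Classical.arbitrary _ with hfdef
  rw [Finset.card_eq_sum_card_fiberwise (f := f)
    (t := (Finset.univ : Finset ({x // x ∈ Δ} ↪ {x // x ∈ K})))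
    (fun σ _ => Finset.mem_univ _)]
  have hfib : ∀ j : {x // x ∈ Δ} ↪ {x // x ∈ K},
      ((Finset.univ.filter fun σ : Equiv.Perm V => Δ.image σ ⊆ K).filter fun σ => f σ = j).card
        = (Fintype.card V - Δ.card).factorial := by
    intro j
    rw [← card_perm_agree V Δ (j.trans (Function.Embedding.subtype _))]
    congr 1
    ext σ
    simp only [Finset.mem_filter, Finset.mem_univ, true_and]
    constructor
    · rintro ⟨hsub, rfl⟩
      intro x h
      simp [hfdef, dif_pos hsub, Function.Embedding.subtype]
      rfl
    · intro h
      have hsub : Δ.image σ ⊆ K := by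
        intro y hy
        obtain ⟨x, hx, rfl⟩ := Finset.mem_image.1 hy
        rw [h x hx]
        exact (j ⟨x, hx⟩).2
      refine ⟨hsub, ?_⟩
      ext x
      simp [hfdef, dif_pos hsub, h x.1 x.2]
      exact Subtype.ext (h x.1 x.2)
  rw [Finset.sum_congr rfl (fun j _ => hfib j), Finset.sum_const, Finset.card_univ,
    Fintype.card_embedding_eq, Fintype.card_coe, Fintype.card_coe, smul_eq_mul]

lemma card_perm_exists_mem (V : Type) [Fintype V] [DecidableEq V]
    (l k : ℕ) (hl : 2 ≤ l) (hlk : l ≤ k)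
    (M : Finset (Finset V)) (hM : ∀ A ∈ M, A.card = k)
    (hM' : ∀ A ∈ M, ∀ B ∈ M, A ≠ B → (A ∩ B).card ≤ 1)
    (Δ : Finset V) (hΔ : Δ.card = l) :
    (Finset.univ.filter fun σ : Equiv.Perm V => ∃ K ∈ M, Δ.image σ ⊆ K).card
      = M.card * (k.descFactorial l * (Fintype.card V - l).factorial) := by
  classical
  have hsplit : (Finset.univ.filter fun σ : Equiv.Perm V => ∃ K ∈ M, Δ.image σ ⊆ K)
      = M.biUnion (fun K => Finset.univ.filter fun σ : Equiv.Perm V => Δ.image σ ⊆ K) := by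
    ext σ
    simp [Finset.mem_biUnion]
  have hdisj : ∀ A ∈ M, ∀ B ∈ M, A ≠ B → Disjoint
      (Finset.univ.filter fun σ : Equiv.Perm V => Δ.image σ ⊆ A)
      (Finset.univ.filter fun σ : Equiv.Perm V => Δ.image σ ⊆ B) := by
    intro A hA B hB hAB
    rw [Finset.disjoint_left]
    intro σ hσA hσB
    have h1 : Δ.image σ ⊆ A := (Finset.mem_filter.1 hσA).2
    have h2 : Δ.image σ ⊆ B := (Finset.mem_filter.1 hσB).2
    have hcard := Finset.card_le_card (Finset.subset_inter h1 h2)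
    rw [Finset.card_image_of_injective _ σ.injective, hΔ] at hcard
    have := hM' A hA B hB hAB
    omega
  rw [hsplit, Finset.card_biUnion hdisj,
    Finset.sum_congr rfl (fun K hK => by
      rw [card_perm_image_subset V Δ K (by rw [hΔ, hM K hK]; exact hlk), hΔ, hM K hK]),
    Finset.sum_const, smul_eq_mul]

/-- `cliqueCount G r` is the number of `r`-element vertex subsets of `G`
inducing a complete subgraph (`r`-cliques). -/
noncomputable def cliqueCount {V : Type} (G : SimpleGraph V) (r : ℕ) : ℕ :=
  Set.ncard {S : Finset V | G.IsNClique r S}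

/-- For a graph `H` on a vertex set `S` of size `s`, integers `2 ≤ l ≤ k ≤ s`,
and a family `M` of `k`-element subsets of `S` any two distinct members of which
share at most one element, the expectation over a uniformly random permutation
`σ` of `S` of the number of `l`-cliques `Δ` of `H` with `σ(Δ)` contained in some
member of `M` equals `cl(H,l) · |M| · k(k-1)⋯(k-l+1) / (s(s-1)⋯(s-l+1))`. -/
theorem expectation_cliques_in_clique_system (V : Type) [Fintype V] [DecidableEq V]
    (s : ℕ) (hcard : Fintype.card V = s)
    (H : SimpleGraph V) (l k : ℕ) (hl : 2 ≤ l) (hlk : l ≤ k) (hks : k ≤ s)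
    (M : Finset (Finset V)) (hM : ∀ A ∈ M, A.card = k)
    (hM' : ∀ A ∈ M, ∀ B ∈ M, A ≠ B → (A ∩ B).card ≤ 1) :
    (∑ σ : Equiv.Perm V,
        (Set.ncard {Δ : Finset V | H.IsNClique l Δ ∧ ∃ K ∈ M, Δ.image σ ⊆ K} : ℝ)) /
      (Nat.factorial s : ℝ)
    = (cliqueCount H l : ℝ) * (M.card : ℝ) * (Nat.descFactorial k l : ℝ) /
        (Nat.descFactorial s l : ℝ) := by
  classical
  subst hcard
  set C : Finset (Finset V) := Finset.univ.filter fun Δ => H.IsNClique l Δ with hC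
  have hCcount : cliqueCount H l = C.card := by
    rw [cliqueCount, Set.ncard_eq_toFinset_card', Set.toFinset_setOf]
  have hls : l ≤ Fintype.card V := le_trans hlk hks
  have hset : ∀ σ : Equiv.Perm V,
      ({Δ : Finset V | H.IsNClique l Δ ∧ ∃ K ∈ M, Δ.image σ ⊆ K}).ncard
        = (C.filter fun Δ => ∃ K ∈ M, Δ.image σ ⊆ K).card := by
    intro σ
    rw [Set.ncard_eq_toFinset_card', Set.toFinset_setOf, hC, Finset.filter_filter]
  have hnum : (∑ σ : Equiv.Perm V,
      (({Δ : Finset V | H.IsNClique l Δ ∧ ∃ K ∈ M, Δ.image σ ⊆ K}).ncard : ℕ))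
      = C.card * (M.card * (k.descFactorial l * (Fintype.card V - l).factorial)) := by
    calc (∑ σ : Equiv.Perm V,
        (({Δ : Finset V | H.IsNClique l Δ ∧ ∃ K ∈ M, Δ.image σ ⊆ K}).ncard : ℕ))
        = ∑ σ : Equiv.Perm V, ∑ Δ ∈ C, if ∃ K ∈ M, Δ.image σ ⊆ K then 1 else 0 := by
          refine Finset.sum_congr rfl fun σ _ => ?_
          rw [hset σ, Finset.card_filter]
      _ = ∑ Δ ∈ C, ∑ σ : Equiv.Perm V, if ∃ K ∈ M, Δ.image σ ⊆ K then 1 else 0 :=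
          Finset.sum_comm
      _ = ∑ Δ ∈ C, (Finset.univ.filter fun σ : Equiv.Perm V => ∃ K ∈ M, Δ.image σ ⊆ K).card := by
          refine Finset.sum_congr rfl fun Δ _ => ?_
          rw [Finset.card_filter]
      _ = ∑ Δ ∈ C, M.card * (k.descFactorial l * (Fintype.card V - l).factorial) := by
          refine Finset.sum_congr rfl fun Δ hΔ => ?_
          exact card_perm_exists_mem V l k hl hlk M hM hM' Δ
            ((Finset.mem_filter.1 hΔ).2.card_eq)
      _ = C.card * (M.card * (k.descFactorial l * (Fintype.card V - l).factorial)) := by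
          rw [Finset.sum_const, smul_eq_mul]
  have hnumR : (∑ σ : Equiv.Perm V,
      (({Δ : Finset V | H.IsNClique l Δ ∧ ∃ K ∈ M, Δ.image σ ⊆ K}).ncard : ℝ))
      = ((C.card * (M.card * (k.descFactorial l * (Fintype.card V - l).factorial)) : ℕ) : ℝ) := by
    rw [← hnum]
    push_cast
    rfl
  rw [hnumR, hCcount]
  have hfact : (Fintype.card V - l).factorial * (Fintype.card V).descFactorial l
      = (Fintype.card V).factorial := Nat.factorial_mul_descFactorial hls
  have hd0 : ((Fintype.card V).descFactorial l : ℝ) ≠ 0 := by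
    have : ¬ Fintype.card V < l := not_lt.2 hls
    exact_mod_cast fun h => this (Nat.descFactorial_eq_zero_iff_lt.1 (by exact_mod_cast h))
  have hf0 : ((Fintype.card V).factorial : ℝ) ≠ 0 := by
    exact_mod_cast (Nat.factorial_pos _).ne'
  rw [div_eq_div_iff hf0 hd0]
  push_cast
  rw [← hfact]
  push_cast
  ring
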